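/- Let a, b, c, d, e be nonzero integers and work in ℚ(T). Set D = T^6 + 2c T^5 + (c^2 + 4b + 2d) T^4 + (2cd+2e) T^3 + (2ce + d^2) T^2 + 2deT + e^2, t₁ = -4abT^3/D, x = t₁ T, y = T and z = (-T^3 t₁^2 - aT^2 t₁ + bT)/(t₁ T^2). Then x ≠ 0, y ≠ 0, and z^2 = f(x)^2 + g(y)^2, where f(x) = x + a + b/x and g(y) = y + c + d/y + e/y^2; i.e., (x, y, z) is a solution in ℚ(T) of z^2 = f(x)^2 + g(y)^2. -/

import Mathlib

open Polynomial in
set_option maxHeartbeats 1000000 in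
/-- The point of `ℚ(T)` constructed in the proof of Theorem 1.2 of
Zhang–Zargar gives a solution `(x, y, z)` of `z^2 = f(x)^2 + g(y)^2` with
`f(x) = x + a + b/x` and `g(y) = y + c + d/y + e/y^2`. -/
theorem stmt9 (a b c d e : ℤ) (ha : a ≠ 0) (hb : b ≠ 0) (hc : c ≠ 0)
    (hd : d ≠ 0) (he : e ≠ 0) :
    let T : RatFunc ℚ := RatFunc.X
    let D : RatFunc ℚ := T ^ 6 + 2 * c * T ^ 5 + (c ^ 2 + 4 * b + 2 * d) * T ^ 4
      + (2 * c * d + 2 * e) * T ^ 3 + (2 * c * e + d ^ 2) * T ^ 2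
      + 2 * d * e * T + e ^ 2
    let t₁ : RatFunc ℚ := -4 * a * b * T ^ 3 / D
    let x : RatFunc ℚ := t₁ * T
    let y : RatFunc ℚ := T
    let z : RatFunc ℚ := (-T ^ 3 * t₁ ^ 2 - a * T ^ 2 * t₁ + b * T) / (t₁ * T ^ 2)
    x ≠ 0 ∧ y ≠ 0 ∧
      z ^ 2 = (x + a + b / x) ^ 2 + (y + c + d / y + e / y ^ 2) ^ 2 := by
  intro T D t₁ x y z
  haveI : CharZero (RatFunc ℚ) :=
    charZero_of_injective_algebraMap (algebraMap ℚ (RatFunc ℚ)).injective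
  have hT : T ≠ 0 := RatFunc.X_ne_zero
  have ha' : (a : RatFunc ℚ) ≠ 0 := Int.cast_ne_zero.mpr ha
  have hb' : (b : RatFunc ℚ) ≠ 0 := Int.cast_ne_zero.mpr hb
  have hD : D ≠ 0 := by
    have key : D = algebraMap (Polynomial ℚ) (RatFunc ℚ)
        (X ^ 6 + 2 * (c : ℚ[X]) * X ^ 5
          + ((c : ℚ[X]) ^ 2 + 4 * (b : ℚ[X]) + 2 * (d : ℚ[X])) * X ^ 4
          + (2 * (c : ℚ[X]) * (d : ℚ[X]) + 2 * (e : ℚ[X])) * X ^ 3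
          + (2 * (c : ℚ[X]) * (e : ℚ[X]) + (d : ℚ[X]) ^ 2) * X ^ 2
          + 2 * (d : ℚ[X]) * (e : ℚ[X]) * X + (e : ℚ[X]) ^ 2) := by
      simp only [map_add, map_mul, map_pow, map_intCast, map_ofNat,
        RatFunc.algebraMap_X, D, T]
    rw [key]
    refine (map_ne_zero_iff _ (RatFunc.algebraMap_injective ℚ)).mpr ?_
    refine Polynomial.Monic.ne_zero ?_
    monicity!
  have hDdef : D = T ^ 6 + 2 * c * T ^ 5 + (c ^ 2 + 4 * b + 2 * d) * T ^ 4
      + (2 * c * d + 2 * e) * T ^ 3 + (2 * c * e + d ^ 2) * T ^ 2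
      + 2 * d * e * T + e ^ 2 := rfl
  have ht₁def : t₁ = -4 * a * b * T ^ 3 / D := rfl
  have hxdef : x = t₁ * T := rfl
  have hydef : y = T := rfl
  have hzdef : z = (-T ^ 3 * t₁ ^ 2 - a * T ^ 2 * t₁ + b * T) / (t₁ * T ^ 2) := rfl
  clear_value z y x t₁ D
  subst hydef
  have ht₁ : t₁ ≠ 0 := by
    rw [ht₁def]
    apply div_ne_zero _ hD
    simp only [ne_eq, mul_eq_zero, pow_eq_zero_iff, not_or]
    refine ⟨⟨⟨by norm_num, ha'⟩, hb'⟩, fun h => hT (by simpa using h)⟩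
  have ht₁D : t₁ * D = -4 * a * b * T ^ 3 := by
    rw [ht₁def, div_mul_cancel₀ _ hD]
  have hx0 : x ≠ 0 := hxdef ▸ mul_ne_zero ht₁ hT
  refine ⟨hx0, hT, ?_⟩
  have hz : z = -x - a + b / x := by
    rw [hzdef, hxdef]
    field_simp
  have A : (x + a + b / x) ^ 2 - z ^ 2 = 4 * b + 4 * a * b / x := by
    rw [hz]
    field_simp
    ring
  have B : 4 * (a : RatFunc ℚ) * b / x = -D / T ^ 4 := by
    rw [hxdef, div_eq_div_iff (mul_ne_zero ht₁ hT) (pow_ne_zero 4 hT)]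
    linear_combination T * ht₁D
  have C : (T + c + d / T + e / T ^ 2) ^ 2 = D / T ^ 4 - 4 * b := by
    rw [hDdef]
    field_simp
    ring
  linear_combination -A - B - C
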